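/- Let Δ ≥ 50 and λ ≥ 50/Δ. Suppose x, y > 0 satisfy x = λ/(1+y)^{Δ-1}, y = λ/(1+x)^{Δ-1}, and x < y. Then x ≤ 1/(30λΔ²). -/

import Mathlib

open Real

set_option maxHeartbeats 1000000 in
theorem stmt_10 (Δ : ℕ) (hΔ : 50 ≤ Δ) (lam : ℝ) (hlam : 50 / Δ ≤ lam)
    (x y : ℝ) (hx : 0 < x) (hy : 0 < y)
    (hxeq : x = lam / (1 + y) ^ (Δ - 1)) (hyeq : y = lam / (1 + x) ^ (Δ - 1))
    (hxy : x < y) :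
    x ≤ 1 / (30 * lam * Δ ^ 2) := by
  set D : ℕ := Δ - 1 with hDdef
  set d : ℝ := (Δ : ℝ) with hddef
  have hd50 : (50 : ℝ) ≤ d := by exact_mod_cast Nat.cast_le.mpr hΔ
  have hd0 : (0 : ℝ) < d := by linarith
  have hDcast : (D : ℝ) = d - 1 := by
    rw [hDdef, hddef]
    push_cast [Nat.cast_sub (by omega : 1 ≤ Δ)]
    ring
  have hlam0 : 0 < lam := lt_of_lt_of_le (by positivity) hlam
  have hpy : (0:ℝ) < (1 + y) ^ D := by positivity
  have hpx : (0:ℝ) < (1 + x) ^ D := by positivity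
  have h1 : x * (1 + y) ^ D = lam := by rw [hxeq]; field_simp
  have h2 : y * (1 + x) ^ D = lam := by rw [hyeq]; field_simp
  -- the function g
  set c : ℝ := 1 / (d - 2) with hcdef
  have hc0 : 0 < c := by rw [hcdef]; exact one_div_pos.mpr (by linarith)
  set g : ℝ → ℝ := fun t => (D : ℝ) * Real.log (1 + t) - Real.log t with hgdef
  have hg : ∀ t : ℝ, 0 < t → HasDerivAt g ((D : ℝ) / (1 + t) - 1 / t) t := by
    intro t ht
    have h1' : HasDerivAt (fun s : ℝ => 1 + s) 1 t := (hasDerivAt_id t).const_add 1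
    have h2' : HasDerivAt (fun s : ℝ => Real.log (1 + s)) (1 / (1 + t)) t := by
      have := (Real.hasDerivAt_log (by linarith : (1:ℝ) + t ≠ 0)).comp t h1'
      simpa [one_div, Function.comp_def] using this
    have h3' : HasDerivAt (fun s : ℝ => Real.log s) (1 / t) t := by
      simpa [one_div] using Real.hasDerivAt_log ht.ne'
    exact ((h2'.const_mul (D : ℝ)).sub h3').congr_deriv (by ring)
  have hmono : StrictMonoOn g (Set.Ici c) := by
    apply strictMonoOn_of_deriv_pos (convex_Ici c)
    · intro t ht
      exact (hg t (lt_of_lt_of_le hc0 ht)).continuousAt.continuousWithinAt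
    · intro t ht
      rw [interior_Ici] at ht
      have htc : c < t := ht
      have ht0 : 0 < t := hc0.trans htc
      rw [(hg t ht0).deriv]
      have h1t : (0:ℝ) < 1 + t := by linarith
      rw [sub_pos, div_lt_div_iff₀ ht0 h1t]
      have hct : 1 < (d - 2) * t := by
        rw [hcdef] at htc
        rw [div_lt_iff₀ (by linarith : (0:ℝ) < d - 2)] at htc
        linarith
      rw [hDcast]
      nlinarith
  have hgxy : g x = g y := by
    have h12 : x * (1 + y) ^ D = y * (1 + x) ^ D := h1.trans h2.symm
    have hlog := congrArg Real.log h12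
    rw [Real.log_mul hx.ne' hpy.ne', Real.log_mul hy.ne' hpx.ne',
      Real.log_pow, Real.log_pow] at hlog
    simp only [hgdef]
    linarith
  have hxc : x ≤ c := by
    by_contra hcon
    push_neg at hcon
    have := hmono (Set.mem_Ici.mpr hcon.le) (Set.mem_Ici.mpr (hcon.le.trans hxy.le)) hxy
    linarith [this, hgxy.le]
  -- (1+x)^D ≤ 3
  have hexp148 : Real.exp (1 / 48) ≤ 48 / 47 := by
    have h := Real.add_one_le_exp (-(1 / 48) : ℝ)
    rw [Real.exp_neg] at h
    have hp : (0:ℝ) < Real.exp (1 / 48) := Real.exp_pos _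
    have hinv : Real.exp (1 / 48) * (Real.exp (1 / 48))⁻¹ = 1 := mul_inv_cancel₀ hp.ne'
    nlinarith
  have hexp3 : Real.exp (49 / 48) ≤ 3 := by
    have e1 : Real.exp 1 < 2.7182818286 := Real.exp_one_lt_d9
    have : Real.exp (49 / 48 : ℝ) = Real.exp 1 * Real.exp (1 / 48) := by
      rw [← Real.exp_add]; norm_num
    rw [this]
    calc Real.exp 1 * Real.exp (1 / 48) ≤ 2.7182818286 * (48 / 47) :=
          mul_le_mul e1.le hexp148 (Real.exp_pos _).le (by norm_num)
      _ ≤ 3 := by norm_num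
  have h3bound : (1 + x) ^ D ≤ 3 := by
    calc (1 + x) ^ D ≤ (1 + c) ^ D := by
          apply pow_le_pow_left₀ (by linarith) (by linarith)
      _ ≤ Real.exp c ^ D := by
          apply pow_le_pow_left₀ (by linarith)
          linarith [Real.add_one_le_exp c]
      _ = Real.exp ((D : ℝ) * c) := by rw [← Real.exp_nat_mul]
      _ ≤ Real.exp (49 / 48) := by
          apply Real.exp_le_exp.mpr
          rw [hDcast, hcdef, mul_one_div, div_le_div_iff₀ (by linarith) (by norm_num)]
          linarith
      _ ≤ 3 := hexp3
  have hy3 : lam / 3 ≤ y := by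
    rw [hyeq, div_le_div_iff₀ (by norm_num) hpx]
    nlinarith
  -- key inequality
  have hC8 : (d - 8) ^ 8 ≤ 40320 * (D.choose 8 : ℝ) := by
    have h := Nat.pow_le_choose 8 D (α := ℝ)
    have hsub : D + 1 - 8 = Δ - 8 := by omega
    rw [hsub] at h
    have hcast : ((Δ - 8 : ℕ) : ℝ) = d - 8 := by
      rw [Nat.cast_sub (by omega : 8 ≤ Δ)]; norm_num [hddef]
    rw [hcast] at h
    have hfacpos : (0:ℝ) < (Nat.factorial 8 : ℝ) := by
      exact_mod_cast Nat.factorial_pos 8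
    rw [div_le_iff₀ hfacpos] at h
    have hfac : ((Nat.factorial 8 : ℕ) : ℝ) = 40320 := by norm_num [Nat.factorial]
    rw [hfac] at h
    linarith
  have hC9 : (d - 9) ^ 9 ≤ 362880 * (D.choose 9 : ℝ) := by
    have h := Nat.pow_le_choose 9 D (α := ℝ)
    have hsub : D + 1 - 9 = Δ - 9 := by omega
    rw [hsub] at h
    have hcast : ((Δ - 9 : ℕ) : ℝ) = d - 9 := by
      rw [Nat.cast_sub (by omega : 9 ≤ Δ)]; norm_num [hddef]
    rw [hcast] at h
    have hfacpos : (0:ℝ) < (Nat.factorial 9 : ℝ) := by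
      exact_mod_cast Nat.factorial_pos 9
    rw [div_le_iff₀ hfacpos] at h
    have hfac : ((Nat.factorial 9 : ℕ) : ℝ) = 362880 := by norm_num [Nat.factorial]
    rw [hfac] at h
    linarith
  set u : ℝ := lam / 3 with hudef
  have hu0 : 0 < u := by positivity
  have hs : (50 : ℝ) ≤ 3 * d * u := by
    rw [hudef]
    rw [div_le_iff₀ hd0] at hlam
    nlinarith
  have hL : 214277011200 * d ^ 9 ≤
      421875000000 * d * (d - 8) ^ 8 + 781250000000 * (d - 9) ^ 9 := by
    have hm : (0:ℝ) ≤ d - 50 := by linarith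
    have hiden : 421875000000 * d * (d - 8) ^ 8 + 781250000000 * (d - 9) ^ 9
        - 214277011200 * d ^ 9 =
        41500789294682031250000000
        + 23800625063845031250000000 * (d - 50)
        + 3470952636415125000000000 * (d - 50) ^ 2
        + 249705218891625000000000 * (d - 50) ^ 3
        + 10649631450937500000000 * (d - 50) ^ 4
        + 288826424617500000000 * (d - 50) ^ 5
        + 5065223507400000000 * (d - 50) ^ 6
        + 55917943992000000 * (d - 50) ^ 7
        + 354700344960000 * (d - 50) ^ 8
        + 988847988800 * (d - 50) ^ 9 := by ring
    linarith [pow_nonneg hm 2, pow_nonneg hm 3, pow_nonneg hm 4, pow_nonneg hm 5,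
      pow_nonneg hm 6, pow_nonneg hm 7, pow_nonneg hm 8, pow_nonneg hm 9, hm]
  have hbin : u ^ 8 * (D.choose 8 : ℝ) + u ^ 9 * (D.choose 9 : ℝ) ≤ (1 + u) ^ D := by
    have hsum : (u + 1) ^ D = ∑ k ∈ Finset.range (D + 1), u ^ k * (D.choose k : ℝ) := by
      rw [add_pow]
      simp
    have hsubset : ({8, 9} : Finset ℕ) ⊆ Finset.range (D + 1) := by
      intro k hk
      simp only [Finset.mem_insert, Finset.mem_singleton] at hk
      rcases hk with h | h <;> simp [h] <;> omega
    have hpair : ∑ k ∈ ({8, 9} : Finset ℕ), u ^ k * (D.choose k : ℝ)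
        = u ^ 8 * (D.choose 8 : ℝ) + u ^ 9 * (D.choose 9 : ℝ) := by
      rw [Finset.sum_pair (by norm_num : (8:ℕ) ≠ 9)]
    calc u ^ 8 * (D.choose 8 : ℝ) + u ^ 9 * (D.choose 9 : ℝ)
        = ∑ k ∈ ({8, 9} : Finset ℕ), u ^ k * (D.choose k : ℝ) := hpair.symm
      _ ≤ ∑ k ∈ Finset.range (D + 1), u ^ k * (D.choose k : ℝ) := by
          apply Finset.sum_le_sum_of_subset_of_nonneg hsubset
          intro k _ _
          positivity
      _ = (u + 1) ^ D := hsum.symm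
      _ = (1 + u) ^ D := by ring
  have hkey : 30 * lam ^ 2 * d ^ 2 ≤ (1 + lam / 3) ^ D := by
    have hM : (0:ℝ) < 362880 * (3 * d) ^ 7 := by positivity
    have hmain : 270 * u ^ 2 * d ^ 2 ≤ u ^ 8 * (D.choose 8 : ℝ) + u ^ 9 * (D.choose 9 : ℝ) := by
      rw [← mul_le_mul_iff_of_pos_right hM]
      have hd8 : (0:ℝ) ≤ (d - 8) ^ 8 := by positivity
      have hd9 : (0:ℝ) ≤ (d - 9) ^ 9 := pow_nonneg (by linarith) 9
      have hu2 : (0:ℝ) ≤ u ^ 2 := sq_nonneg u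
      have h506 : (50:ℝ) ^ 6 ≤ (3 * d * u) ^ 6 := by
        apply pow_le_pow_left₀ (by norm_num) hs
      have h507 : (50:ℝ) ^ 7 ≤ (3 * d * u) ^ 7 := by
        apply pow_le_pow_left₀ (by norm_num) hs
      calc 270 * u ^ 2 * d ^ 2 * (362880 * (3 * d) ^ 7)
          = u ^ 2 * (214277011200 * d ^ 9) := by ring
        _ ≤ u ^ 2 * (421875000000 * d * (d - 8) ^ 8 + 781250000000 * (d - 9) ^ 9) :=
            mul_le_mul_of_nonneg_left hL hu2
        _ = u ^ 2 * (27 * (50:ℝ) ^ 6 * (d - 8) ^ 8 * d + (50:ℝ) ^ 7 * (d - 9) ^ 9) := by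
            ring
        _ ≤ u ^ 2 * (27 * (3 * d * u) ^ 6 * (d - 8) ^ 8 * d + (3 * d * u) ^ 7 * (d - 9) ^ 9) := by
            have hd9' : (0:ℝ) ≤ d - 9 := by linarith
            apply mul_le_mul_of_nonneg_left _ hu2
            have t1 : 27 * (50:ℝ) ^ 6 * (d - 8) ^ 8 * d ≤ 27 * (3 * d * u) ^ 6 * (d - 8) ^ 8 * d := by
              have := mul_le_mul_of_nonneg_right h506 (mul_nonneg hd8 hd0.le)
              nlinarith
            have t2 : (50:ℝ) ^ 7 * (d - 9) ^ 9 ≤ (3 * d * u) ^ 7 * (d - 9) ^ 9 :=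
              mul_le_mul_of_nonneg_right h507 hd9
            linarith
        _ ≤ u ^ 2 * (27 * (3 * d * u) ^ 6 * (40320 * (D.choose 8 : ℝ)) * d
              + (3 * d * u) ^ 7 * (362880 * (D.choose 9 : ℝ))) := by
            apply mul_le_mul_of_nonneg_left _ hu2
            have hp6 : (0:ℝ) ≤ (3 * d * u) ^ 6 := by positivity
            have hp7 : (0:ℝ) ≤ (3 * d * u) ^ 7 := by positivity
            have t1 := mul_le_mul_of_nonneg_left hC8 hp6
            have t2 := mul_le_mul_of_nonneg_left hC9 hp7
            nlinarith
        _ = (u ^ 8 * (D.choose 8 : ℝ) + u ^ 9 * (D.choose 9 : ℝ)) * (362880 * (3 * d) ^ 7) := by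
            ring
    have : 30 * lam ^ 2 * d ^ 2 = 270 * u ^ 2 * d ^ 2 := by rw [hudef]; ring
    rw [this]
    calc 270 * u ^ 2 * d ^ 2 ≤ u ^ 8 * (D.choose 8 : ℝ) + u ^ 9 * (D.choose 9 : ℝ) := hmain
      _ ≤ (1 + u) ^ D := hbin
      _ = (1 + lam / 3) ^ D := by rw [hudef]
  -- finish
  have hxled : x ≤ lam / (1 + lam / 3) ^ D := by
    have hpow : (1 + lam / 3) ^ D ≤ (1 + y) ^ D := by
      apply pow_le_pow_left₀ (by positivity)
      linarith
    rw [hxeq, div_le_div_iff₀ hpy (by positivity)]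
    nlinarith
  have hfin : lam / (1 + lam / 3) ^ D ≤ lam / (30 * lam ^ 2 * d ^ 2) := by
    rw [div_le_div_iff₀ (by positivity) (by positivity)]
    nlinarith
  have heq : lam / (30 * lam ^ 2 * d ^ 2) = 1 / (30 * lam * d ^ 2) := by
    field_simp
  calc x ≤ lam / (1 + lam / 3) ^ D := hxled
    _ ≤ lam / (30 * lam ^ 2 * d ^ 2) := hfin
    _ = 1 / (30 * lam * d ^ 2) := heq
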